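/- Let 𝒜_1, …, 𝒜_t be a k-uniform cross intersecting matching on a finite ground set A, and let π be a linear order on A. Say that π is of type i if there exist X, X' ∈ 𝒜_i such that every element of X is π-smaller than every element of X'. Then π is of type i for at most one index i ∈ {1, …, t}. -/
import Mathlib

/-- A `k`-uniform cross intersecting matching of type `(d 0, …, d (t-1))`. -/
def IsCrossIntersectingMatching {α : Type*} [DecidableEq α] (k t : ℕ)
    (d : Fin t → ℕ) (𝒜 : Fin t → Finset (Finset α)) : Prop :=
  2 ≤ t ∧ 2 ≤ k ∧ (∀ i, 2 ≤ d i) ∧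
  (∀ i, (𝒜 i).card = d i) ∧
  (∀ i, ∀ X ∈ 𝒜 i, X.card = k) ∧
  (∀ i, ∀ X ∈ 𝒜 i, ∀ Y ∈ 𝒜 i, X ≠ Y → Disjoint X Y) ∧
  (∀ i j, i ≠ j → ∀ X ∈ 𝒜 i, ∀ Y ∈ 𝒜 j, (X ∩ Y).Nonempty)

/-- A linear order on the ground set is of type `i` if some `X, X' ∈ 𝒜 i` satisfy
`X < X'` elementwise; every linear order has at most one type. -/
theorem stmt_4 {α : Type*} [Fintype α] [LinearOrder α] (k t : ℕ)
    (d : Fin t → ℕ) (𝒜 : Fin t → Finset (Finset α))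
    (h : IsCrossIntersectingMatching k t d 𝒜)
    (i j : Fin t)
    (hi : ∃ X ∈ 𝒜 i, ∃ X' ∈ 𝒜 i, ∀ x ∈ X, ∀ x' ∈ X', x < x')
    (hj : ∃ Y ∈ 𝒜 j, ∃ Y' ∈ 𝒜 j, ∀ y ∈ Y, ∀ y' ∈ Y', y < y') :
    i = j := by
  by_contra hne
  obtain ⟨X, hX, X', hX', hXX⟩ := hi
  obtain ⟨Y, hY, Y', hY', hYY⟩ := hj
  obtain ⟨-, -, -, -, -, -, cross⟩ := h
  obtain ⟨a, ha⟩ := cross i j hne X hX Y' hY'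
  obtain ⟨b, hb⟩ := cross i j hne X' hX' Y hY
  rw [Finset.mem_inter] at ha hb
  exact absurd (hXX a ha.1 b hb.1) (not_lt.2 (le_of_lt (hYY b hb.2 a ha.2)))
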